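/- Let (r,t) be a legal pair and define F(ρ₁, …, ρ_r) = Σ_{i=1}^r ρᵢ(1 − ρᵢ)^t on the simplex Δ = {ρ ∈ ℝ^r : ρᵢ ≥ 0 for all i, Σᵢ ρᵢ = 1}. Then F attains its maximum on Δ, and every maximizer ρ satisfies one of the following: (i) ρᵢ = 1/r for all i (the Turán solution); or (ii) there exist reals α, β with 0 < α < 2/(t+1) < β < 1, g(α) = g(β), (r−1)α + β = 1, such that ρ is a permutation of (α, α, …, α, β) with r−1 coordinates equal to α, and moreover for every other pair (α′, β′) with 0 < α′ < 2/(t+1) < β′ < 1, g(α′) = g(β′) and (r−1)α′ + β′ = 1, one has g(α′) ≤ g(α). -/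

import Mathlib

set_option maxHeartbeats 1000000

/-- A pair `(r,t)` is legal. -/
def Legal (r t : ℕ) : Prop :=
  (9 ≤ r ∧ 3 ≤ t) ∨ (r = 8 ∧ 4 ≤ t) ∨ (r = 7 ∧ 5 ≤ t) ∨ (r = 6 ∧ 37 ≤ t)

/-- `g` is the derivative of `ρ ↦ ρ(1-ρ)^t`. -/
noncomputable def gfun (t : ℕ) (ρ : ℝ) : ℝ := (1 - ρ) ^ (t - 1) * (1 - ((t : ℝ) + 1) * ρ)

noncomputable def ffun (t : ℕ) (x : ℝ) : ℝ := x * (1 - x) ^ t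

noncomputable def g1 (t : ℕ) (x : ℝ) : ℝ :=
  (t : ℝ) * (1 - x) ^ (t - 2) * (((t : ℝ) + 1) * x - 2)

noncomputable def g2 (t : ℕ) (x : ℝ) : ℝ :=
  (t : ℝ) * ((t : ℝ) - 1) * (1 - x) ^ (t - 3) * (3 - ((t : ℝ) + 1) * x)

noncomputable def hfun (r t : ℕ) (x : ℝ) : ℝ := gfun t x - gfun t (1 - ((r:ℝ) - 1) * x)

noncomputable def h1f (r t : ℕ) (x : ℝ) : ℝ := g1 t x + ((r:ℝ) - 1) * g1 t (1 - ((r:ℝ) - 1) * x)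

noncomputable def h2f (r t : ℕ) (x : ℝ) : ℝ :=
  g2 t x - ((r:ℝ) - 1) ^ 2 * g2 t (1 - ((r:ℝ) - 1) * x)

noncomputable def phi (r t : ℕ) (x : ℝ) : ℝ :=
  ((r:ℝ) - 1) * ffun t x + ffun t (1 - ((r:ℝ) - 1) * x)

def Feas (r : ℕ) (ρ : Fin r → ℝ) : Prop := (∀ i, 0 ≤ ρ i) ∧ ∑ i, ρ i = 1

noncomputable def Fobj (t : ℕ) {r : ℕ} (ρ : Fin r → ℝ) : ℝ := ∑ i, ffun t (ρ i)

lemma hasDerivAt_one_sub_pow (n : ℕ) (x : ℝ) :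
    HasDerivAt (fun y : ℝ => (1 - y) ^ n) (-(n * (1 - x) ^ (n - 1))) x := by
  have h1 : HasDerivAt (fun y : ℝ => 1 - y) (-1) x := by
    simpa using (hasDerivAt_const x (1:ℝ)).fun_sub (hasDerivAt_id x)
  have h2 := (hasDerivAt_pow n (1 - x)).comp x h1
  simpa [mul_comm, Function.comp_def] using h2

lemma hasDerivAt_ffun {t : ℕ} (ht : 1 ≤ t) (x : ℝ) :
    HasDerivAt (ffun t) (gfun t x) x := by
  have h := (hasDerivAt_id x).fun_mul (hasDerivAt_one_sub_pow t x)
  simp only [id] at h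
  have hfe : (fun y : ℝ => y * (1 - y) ^ t) = ffun t := rfl
  rw [hfe] at h
  have hp : (1 - x) ^ t = (1 - x) ^ (t - 1) * (1 - x) := by
    rw [← pow_succ]; congr 1; omega
  have : 1 * (1 - x) ^ t + x * -((t:ℝ) * (1 - x) ^ (t - 1)) = gfun t x := by
    unfold gfun; rw [hp]; ring
  rwa [this] at h

lemma hasDerivAt_gfun {t : ℕ} (ht : 2 ≤ t) (x : ℝ) :
    HasDerivAt (gfun t) (g1 t x) x := by
  have h := (hasDerivAt_one_sub_pow (t-1) x).fun_mul
    ((hasDerivAt_const x (1:ℝ)).fun_sub (((hasDerivAt_id x).const_mul ((t:ℝ)+1))))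
  simp only [id] at h
  have hfe : (fun y : ℝ => (1 - y) ^ (t-1) * (1 - ((t:ℝ)+1) * y)) = gfun t := rfl
  rw [hfe] at h
  have e1 : t - 1 - 1 = t - 2 := by omega
  have hp : (1 - x) ^ (t - 1) = (1 - x) ^ (t - 2) * (1 - x) := by
    rw [← pow_succ]; congr 1; omega
  have hc : ((t - 1 : ℕ) : ℝ) = (t : ℝ) - 1 := by
    push_cast [Nat.cast_sub (show 1 ≤ t by omega)]; ring
  rw [e1, hc] at h
  have : -(((t:ℝ) - 1) * (1 - x) ^ (t - 2)) * (1 - ((t:ℝ) + 1) * x)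
      + (1 - x) ^ (t-1) * (0 - ((t:ℝ) + 1) * 1) = g1 t x := by
    unfold g1; rw [hp]; ring
  rwa [this] at h

lemma hasDerivAt_g1 {t : ℕ} (ht : 3 ≤ t) (x : ℝ) :
    HasDerivAt (g1 t) (g2 t x) x := by
  have h := ((hasDerivAt_one_sub_pow (t-2) x).fun_mul
    ((((hasDerivAt_id x).const_mul ((t:ℝ)+1))).sub_const 2)).const_mul (t : ℝ)
  simp only [id] at h
  have hfe : (fun y : ℝ => (t:ℝ) * ((1 - y) ^ (t-2) * (((t:ℝ)+1) * y - 2))) = g1 t := by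
    funext y; unfold g1; ring
  rw [hfe] at h
  have e1 : t - 2 - 1 = t - 3 := by omega
  have hp : (1 - x) ^ (t - 2) = (1 - x) ^ (t - 3) * (1 - x) := by
    rw [← pow_succ]; congr 1; omega
  have hc : ((t - 2 : ℕ) : ℝ) = (t : ℝ) - 2 := by
    push_cast [Nat.cast_sub (show 2 ≤ t by omega)]; ring
  rw [e1, hc] at h
  have : (t:ℝ) * (-(((t:ℝ) - 2) * (1 - x) ^ (t - 3)) * (((t:ℝ) + 1) * x - 2)
      + (1 - x) ^ (t-2) * (((t:ℝ) + 1) * 1)) = g2 t x := by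
    unfold g2; rw [hp]; ring
  rwa [this] at h

lemma hasDerivAt_inner (r : ℕ) (x : ℝ) :
    HasDerivAt (fun y : ℝ => 1 - ((r:ℝ) - 1) * y) (-((r:ℝ) - 1)) x := by
  simpa using (hasDerivAt_const x (1:ℝ)).fun_sub (((hasDerivAt_id x).const_mul ((r:ℝ) - 1)))

lemma hasDerivAt_hfun {r t : ℕ} (ht : 3 ≤ t) (x : ℝ) :
    HasDerivAt (hfun r t) (h1f r t x) x := by
  have h2 := (hasDerivAt_gfun (show 2 ≤ t by omega) (1 - ((r:ℝ) - 1) * x)).comp x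
    (hasDerivAt_inner r x)
  have h := (hasDerivAt_gfun (show 2 ≤ t by omega) x).fun_sub h2
  unfold hfun h1f
  convert h using 1
  · rfl
  · rfl
  · rfl
  ring

lemma hasDerivAt_h1f {r t : ℕ} (ht : 3 ≤ t) (x : ℝ) :
    HasDerivAt (h1f r t) (h2f r t x) x := by
  have h2 := (hasDerivAt_g1 ht (1 - ((r:ℝ) - 1) * x)).comp x (hasDerivAt_inner r x)
  have h := (hasDerivAt_g1 ht x).fun_add (h2.const_mul ((r:ℝ) - 1))
  unfold h1f h2f
  convert h using 1
  · rfl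
  · rfl
  · rfl
  ring

lemma hasDerivAt_phi {r t : ℕ} (ht : 3 ≤ t) (x : ℝ) :
    HasDerivAt (phi r t) (((r:ℝ) - 1) * hfun r t x) x := by
  have h2 := (hasDerivAt_ffun (show 1 ≤ t by omega) (1 - ((r:ℝ) - 1) * x)).comp x
    (hasDerivAt_inner r x)
  have h := ((hasDerivAt_ffun (show 1 ≤ t by omega) x).const_mul ((r:ℝ) - 1)).fun_add h2
  unfold phi hfun
  convert h using 1
  · rfl
  · rfl
  · rfl
  ring

lemma continuous_gfun (t : ℕ) : Continuous (gfun t) := by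
  unfold gfun; fun_prop

lemma continuous_ffun (t : ℕ) : Continuous (ffun t) := by
  unfold ffun; fun_prop

lemma continuous_hfun (r t : ℕ) : Continuous (hfun r t) := by
  unfold hfun gfun; fun_prop

lemma continuous_h1f (r t : ℕ) : Continuous (h1f r t) := by
  unfold h1f g1; fun_prop

section gshape
variable {t : ℕ} (ht : 3 ≤ t)

lemma c_pos : (0:ℝ) < 2 / ((t:ℝ) + 1) := by positivity

include ht

lemma c_le_half : 2 / ((t:ℝ) + 1) ≤ 1/2 := by
  rw [div_le_div_iff₀ (by positivity) (by norm_num)]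
  have : (3:ℝ) ≤ (t:ℝ) := by exact_mod_cast ht
  linarith

lemma g1_neg {x : ℝ} (hx0 : 0 < x) (hxc : x < 2 / ((t:ℝ) + 1)) : g1 t x < 0 := by
  have htr : (3:ℝ) ≤ (t:ℝ) := by exact_mod_cast ht
  have hx1 : x < 1 := lt_of_lt_of_le hxc (le_trans (c_le_half ht) (by norm_num))
  have hx1' : (0:ℝ) < 1 - x := by linarith
  have h1 : (0:ℝ) < (1 - x) ^ (t - 2) := by positivity
  have h2 : ((t:ℝ) + 1) * x - 2 < 0 := by
    have := (lt_div_iff₀ (show (0:ℝ) < (t:ℝ)+1 by positivity)).1 hxc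
    nlinarith
  have ht0 : (0:ℝ) < (t:ℝ) := by linarith
  unfold g1
  exact mul_neg_of_pos_of_neg (by positivity) h2

lemma g1_pos {x : ℝ} (hxc : 2 / ((t:ℝ) + 1) < x) (hx1 : x < 1) : 0 < g1 t x := by
  have htr : (3:ℝ) ≤ (t:ℝ) := by exact_mod_cast ht
  have hx1' : (0:ℝ) < 1 - x := by linarith
  have h1 : (0:ℝ) < (1 - x) ^ (t - 2) := by positivity
  have h2 : 0 < ((t:ℝ) + 1) * x - 2 := by
    have := (div_lt_iff₀ (show (0:ℝ) < (t:ℝ)+1 by positivity)).1 hxc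
    nlinarith
  have ht0 : (0:ℝ) < (t:ℝ) := by linarith
  unfold g1
  exact mul_pos (by positivity) h2

lemma gfun_strictAntiOn : StrictAntiOn (gfun t) (Set.Icc 0 (2 / ((t:ℝ) + 1))) := by
  apply strictAntiOn_of_deriv_neg (convex_Icc _ _) (continuous_gfun t).continuousOn
  intro x hx
  rw [interior_Icc, Set.mem_Ioo] at hx
  rw [(hasDerivAt_gfun (show 2 ≤ t by omega) x).deriv]
  exact g1_neg ht hx.1 hx.2

lemma gfun_strictMonoOn : StrictMonoOn (gfun t) (Set.Icc (2 / ((t:ℝ) + 1)) 1) := by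
  apply strictMonoOn_of_deriv_pos (convex_Icc _ _) (continuous_gfun t).continuousOn
  intro x hx
  rw [interior_Icc, Set.mem_Ioo] at hx
  rw [(hasDerivAt_gfun (show 2 ≤ t by omega) x).deriv]
  exact g1_pos ht hx.1 hx.2

omit ht in
lemma gfun_zero : gfun t 0 = 1 := by unfold gfun; simp

lemma gfun_one : gfun t 1 = 0 := by
  unfold gfun
  have : (1:ℝ) - 1 = 0 := by ring
  rw [this, zero_pow (by omega)]; ring

lemma gfun_c_min {y : ℝ} (hy : y ∈ Set.Icc (0:ℝ) 1) :
    gfun t (2 / ((t:ℝ) + 1)) ≤ gfun t y := by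
  set c := 2 / ((t:ℝ) + 1) with hc
  have hc0 : (0:ℝ) ≤ c := le_of_lt (c_pos)
  have hc1 : c ≤ 1 := le_trans (c_le_half ht) (by norm_num)
  rcases le_total y c with h | h
  · rcases eq_or_lt_of_le h with h' | h'
    · rw [h']
    · exact le_of_lt (gfun_strictAntiOn ht ⟨hy.1, h⟩ ⟨hc0, le_refl _⟩ h')
  · rcases eq_or_lt_of_le h with h' | h'
    · rw [← h']
    · exact le_of_lt (gfun_strictMonoOn ht ⟨le_refl _, hc1⟩ ⟨h, hy.2⟩ h')

lemma gfun_lt_one {x : ℝ} (hx0 : 0 < x) (hx1 : x ≤ 1) : gfun t x < 1 := by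
  set c := 2 / ((t:ℝ) + 1) with hc
  have hc0 : (0:ℝ) < c := c_pos
  have hc1 : c ≤ 1 := le_trans (c_le_half ht) (by norm_num)
  rcases le_total x c with h | h
  · have := gfun_strictAntiOn ht ⟨le_refl _, le_of_lt hc0⟩ ⟨le_of_lt hx0, h⟩ hx0
    rwa [gfun_zero] at this
  · have h2 : gfun t x ≤ gfun t 1 := by
      rcases eq_or_lt_of_le hx1 with h' | h'
      · rw [h']
      · exact le_of_lt (gfun_strictMonoOn ht ⟨h, hx1⟩ ⟨hc1, le_refl _⟩ h')
    rw [gfun_one ht] at h2; linarith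

end gshape

section maxi
variable {r t : ℕ}

lemma Fobj_eq (ρ : Fin r → ℝ) : ∑ i, ρ i * (1 - ρ i) ^ t = Fobj t ρ := rfl

lemma exists_max (hr : 1 ≤ r) :
    ∃ ρ : Fin r → ℝ, Feas r ρ ∧ ∀ σ : Fin r → ℝ, Feas r σ → Fobj t σ ≤ Fobj t ρ := by
  have hne : (setOf (Feas r)).Nonempty := by
    refine ⟨fun _ => 1 / (r:ℝ), fun i => by positivity, ?_⟩
    rw [Finset.sum_const, Finset.card_univ, Fintype.card_fin, nsmul_eq_mul]
    field_simp
  have hsub : setOf (Feas r) ⊆ Set.Icc (0 : Fin r → ℝ) 1 := by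
    intro ρ hρ
    constructor
    · intro i; exact hρ.1 i
    · intro i
      have := Finset.single_le_sum (f := ρ) (fun k _ => hρ.1 k) (Finset.mem_univ i)
      rw [hρ.2] at this; exact this
  have hclosed : IsClosed (setOf (Feas r)) := by
    have h1 : IsClosed {ρ : Fin r → ℝ | ∀ i, 0 ≤ ρ i} := by
      have : {ρ : Fin r → ℝ | ∀ i, 0 ≤ ρ i} = ⋂ i, {ρ : Fin r → ℝ | 0 ≤ ρ i} := by
        ext; simp
      rw [this]
      exact isClosed_iInter fun i => isClosed_le continuous_const (continuous_apply i)
    have h2 : IsClosed {ρ : Fin r → ℝ | ∑ i, ρ i = 1} :=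
      isClosed_eq (continuous_finset_sum _ fun i _ => continuous_apply i) continuous_const
    exact h1.inter h2
  have hcompact : IsCompact (setOf (Feas r)) :=
    (isCompact_Icc).of_isClosed_subset hclosed hsub
  have hcont : ContinuousOn (Fobj t) (setOf (Feas r)) :=
    (continuous_finset_sum _ fun i _ => (continuous_ffun t).comp (continuous_apply i)).continuousOn
  obtain ⟨ρ, hρ, hmax⟩ := hcompact.exists_isMaxOn hne hcont
  exact ⟨ρ, hρ, fun σ hσ => hmax hσ⟩

variable {ρ : Fin r → ℝ}

lemma sum_split {M : Type*} [AddCommMonoid M] (ψ : Fin r → M) {i j : Fin r} (hij : i ≠ j) :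
    ∑ k, ψ k = ψ j + ψ i + ∑ k ∈ (Finset.univ.erase j).erase i, ψ k := by
  have hj : j ∈ Finset.univ (α := Fin r) := Finset.mem_univ j
  have hi : i ∈ Finset.univ.erase j := Finset.mem_erase.2 ⟨hij, Finset.mem_univ i⟩
  rw [← Finset.add_sum_erase _ ψ hj, ← Finset.add_sum_erase _ ψ hi, add_assoc]

lemma pert_le (hfe : Feas r ρ) (hmax : ∀ σ : Fin r → ℝ, Feas r σ → Fobj t σ ≤ Fobj t ρ)
    {i j : Fin r} (hij : i ≠ j) {a b : ℝ} (ha : 0 ≤ a) (hb : 0 ≤ b)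
    (hab : a + b = ρ i + ρ j) :
    ffun t a + ffun t b ≤ ffun t (ρ i) + ffun t (ρ j) := by
  set σ := Function.update (Function.update ρ i a) j b with hσ
  have hσj : σ j = b := by rw [hσ]; simp
  have hσi : σ i = a := by
    rw [hσ, Function.update_of_ne hij, Function.update_self]
  have hσk : ∀ k, k ≠ i → k ≠ j → σ k = ρ k := by
    intro k hki hkj
    rw [hσ, Function.update_of_ne hkj, Function.update_of_ne hki]
  have hsum : ∀ (φ : ℝ → ℝ), ∑ k, φ (σ k) = φ b + φ a - φ (ρ j) - φ (ρ i) + ∑ k, φ (ρ k) := by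
    intro φ
    rw [sum_split (fun k => φ (σ k)) hij, sum_split (fun k => φ (ρ k)) hij, hσj, hσi]
    have : ∑ k ∈ (Finset.univ.erase j).erase i, φ (σ k)
        = ∑ k ∈ (Finset.univ.erase j).erase i, φ (ρ k) := by
      apply Finset.sum_congr rfl
      intro k hk
      rw [Finset.mem_erase, Finset.mem_erase] at hk
      rw [hσk k hk.1 hk.2.1]
    rw [this]; ring
  have hfeσ : Feas r σ := by
    constructor
    · intro k
      by_cases hkj : k = j
      · rw [hkj, hσj]; exact hb
      by_cases hki : k = i
      · rw [hki, hσi]; exact ha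
      · rw [hσk k hki hkj]; exact hfe.1 k
    · have := hsum id
      simp only [id] at this
      rw [this, hfe.2]; linarith
  have := hmax σ hfeσ
  unfold Fobj at this
  rw [hsum (ffun t)] at this
  linarith

lemma coord_le_one (hfe : Feas r ρ) (i : Fin r) : ρ i ≤ 1 := by
  have := Finset.single_le_sum (f := ρ) (fun k _ => hfe.1 k) (Finset.mem_univ i)
  rw [hfe.2] at this; exact this

lemma exists_pos (hfe : Feas r ρ) : ∃ j, 0 < ρ j := by
  by_contra hc
  push_neg at hc
  have : ∑ i, ρ i ≤ 0 := Finset.sum_nonpos fun i _ => hc i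
  rw [hfe.2] at this; linarith

lemma exchange (ht : 3 ≤ t) (hfe : Feas r ρ)
    (hmax : ∀ σ : Fin r → ℝ, Feas r σ → Fobj t σ ≤ Fobj t ρ)
    {i j : Fin r} (hij : i ≠ j) (hj : 0 < ρ j) :
    gfun t (ρ i) ≤ gfun t (ρ j) := by
  by_contra hc
  push_neg at hc
  set M := (gfun t (ρ i) + gfun t (ρ j)) / 2 with hM
  have hMi : M < gfun t (ρ i) := by rw [hM]; linarith
  have hMj : gfun t (ρ j) < M := by rw [hM]; linarith
  have e1 : ∀ᶠ z in nhds (ρ i), M < gfun t z :=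
    (continuous_gfun t).continuousAt.eventually_const_lt hMi
  have e2 : ∀ᶠ z in nhds (ρ j), gfun t z < M :=
    (continuous_gfun t).continuousAt.eventually_lt_const hMj
  obtain ⟨δ1, hδ1, h1⟩ := Metric.eventually_nhds_iff.1 e1
  obtain ⟨δ2, hδ2, h2⟩ := Metric.eventually_nhds_iff.1 e2
  set ε := min (min (δ1 / 2) (δ2 / 2)) (ρ j) with hε
  have hε0 : 0 < ε := by
    apply lt_min (lt_min (by linarith) (by linarith)) hj
  have hεj : ε ≤ ρ j := min_le_right _ _
  have hεδ1 : ε < δ1 := lt_of_le_of_lt (le_trans (min_le_left _ _) (min_le_left _ _)) (by linarith)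
  have hεδ2 : ε < δ2 := lt_of_le_of_lt (le_trans (min_le_left _ _) (min_le_right _ _)) (by linarith)
  -- MVT on [ρ i, ρ i + ε]
  obtain ⟨ζ1, hζ1, hs1⟩ := exists_hasDerivAt_eq_slope (ffun t) (gfun t)
    (show ρ i < ρ i + ε by linarith) (continuous_ffun t).continuousOn
    (fun x _ => hasDerivAt_ffun (by omega) x)
  obtain ⟨ζ2, hζ2, hs2⟩ := exists_hasDerivAt_eq_slope (ffun t) (gfun t)
    (show ρ j - ε < ρ j by linarith) (continuous_ffun t).continuousOn
    (fun x _ => hasDerivAt_ffun (by omega) x)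
  have hd1 : dist ζ1 (ρ i) < δ1 := by
    rw [Real.dist_eq, abs_lt]
    constructor <;> linarith [hζ1.1, hζ1.2]
  have hd2 : dist ζ2 (ρ j) < δ2 := by
    rw [Real.dist_eq, abs_lt]
    constructor <;> linarith [hζ2.1, hζ2.2]
  have hMζ1 : M < gfun t ζ1 := h1 hd1
  have hMζ2 : gfun t ζ2 < M := h2 hd2
  rw [hs1] at hMζ1
  rw [hs2] at hMζ2
  have he1 : ρ i + ε - ρ i = ε := by ring
  have he2 : ρ j - (ρ j - ε) = ε := by ring
  rw [he1] at hMζ1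
  rw [he2] at hMζ2
  have hq1 : ε * M < ffun t (ρ i + ε) - ffun t (ρ i) := by
    have := (lt_div_iff₀ hε0).1 hMζ1; linarith
  have hq2 : ffun t (ρ j) - ffun t (ρ j - ε) < ε * M := by
    have := (div_lt_iff₀ hε0).1 hMζ2; linarith
  have hp := pert_le hfe hmax hij (a := ρ i + ε) (b := ρ j - ε)
    (by have := hfe.1 i; linarith) (by linarith) (by ring)
  linarith

lemma all_pos (ht : 3 ≤ t) (hr : 1 ≤ r) (hfe : Feas r ρ)
    (hmax : ∀ σ : Fin r → ℝ, Feas r σ → Fobj t σ ≤ Fobj t ρ) (i : Fin r) : 0 < ρ i := by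
  rcases lt_or_eq_of_le (hfe.1 i) with h | h
  · exact h
  obtain ⟨j, hj⟩ := exists_pos hfe
  have hij : i ≠ j := by rintro rfl; linarith
  have := exchange ht hfe hmax hij hj
  rw [← h, gfun_zero] at this
  have := gfun_lt_one ht hj (coord_le_one hfe j)
  linarith

lemma g_all_eq (ht : 3 ≤ t) (hr : 1 ≤ r) (hfe : Feas r ρ)
    (hmax : ∀ σ : Fin r → ℝ, Feas r σ → Fobj t σ ≤ Fobj t ρ) (i j : Fin r) :
    gfun t (ρ i) = gfun t (ρ j) := by
  by_cases hij : i = j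
  · rw [hij]
  · exact le_antisymm (exchange ht hfe hmax hij (all_pos ht hr hfe hmax j))
      (exchange ht hfe hmax (Ne.symm hij) (all_pos ht hr hfe hmax i))

lemma coord_lt_one (ht : 3 ≤ t) (hr : 2 ≤ r) (hfe : Feas r ρ)
    (hmax : ∀ σ : Fin r → ℝ, Feas r σ → Fobj t σ ≤ Fobj t ρ) (i : Fin r) : ρ i < 1 := by
  obtain ⟨j, hij⟩ : ∃ j : Fin r, j ≠ i := by
    have : 1 < Fintype.card (Fin r) := by rw [Fintype.card_fin]; omega
    exact Fintype.exists_ne_of_one_lt_card this i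
  have hj := all_pos ht (by omega) hfe hmax j
  have hsum := hfe.2
  rw [sum_split ρ hij] at hsum
  have hrest : 0 ≤ ∑ k ∈ (Finset.univ.erase i).erase j, ρ k :=
    Finset.sum_nonneg fun k _ => hfe.1 k
  linarith

lemma at_most_one_big (ht : 3 ≤ t) (hfe : Feas r ρ)
    (hmax : ∀ σ : Fin r → ℝ, Feas r σ → Fobj t σ ≤ Fobj t ρ)
    {i j : Fin r} (hij : i ≠ j) (hi : 2 / ((t:ℝ)+1) < ρ i) (hi1 : ρ i < 1)
    (hj : 2 / ((t:ℝ)+1) < ρ j) (hj1 : ρ j < 1) : False := by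
  set c := 2 / ((t:ℝ)+1) with hcdef
  have hr1 : 1 ≤ r := by
    by_contra hr0
    exact absurd (Fin.pos_iff_nonempty.2 ⟨i⟩) (by omega)
  have heq : ρ i = ρ j := by
    have hgeq := g_all_eq ht hr1 hfe hmax i j
    exact (gfun_strictMonoOn ht).injOn ⟨le_of_lt hi, le_of_lt hi1⟩
      ⟨le_of_lt hj, le_of_lt hj1⟩ hgeq
  set β := ρ i with hβ
  set ε := min ((β - c)/2) ((1 - β)/2) with hε
  have hε0 : 0 < ε := lt_min (by simp only [hβ]; linarith) (by simp only [hβ]; linarith)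
  have hε1 : ε ≤ (β - c)/2 := min_le_left _ _
  have hε2 : ε ≤ (1 - β)/2 := min_le_right _ _
  obtain ⟨ζ1, hζ1, hs1⟩ := exists_hasDerivAt_eq_slope (ffun t) (gfun t)
    (show β < β + ε by linarith) (continuous_ffun t).continuousOn
    (fun x _ => hasDerivAt_ffun (by omega) x)
  obtain ⟨ζ2, hζ2, hs2⟩ := exists_hasDerivAt_eq_slope (ffun t) (gfun t)
    (show β - ε < β by linarith) (continuous_ffun t).continuousOn
    (fun x _ => hasDerivAt_ffun (by omega) x)
  have hζlt : gfun t ζ2 < gfun t ζ1 := by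
    apply gfun_strictMonoOn ht
    · constructor <;> [linarith [hζ2.1]; linarith [hζ2.2]]
    · constructor <;> [linarith [hζ1.1]; linarith [hζ1.2]]
    · linarith [hζ2.2, hζ1.1]
  rw [hs1, hs2] at hζlt
  have he1 : β + ε - β = ε := by ring
  have he2 : β - (β - ε) = ε := by ring
  rw [he1, he2] at hζlt
  have hc0 : (0:ℝ) < c := by rw [hcdef]; positivity
  have hp := pert_le hfe hmax hij (a := β + ε) (b := β - ε)
    (by linarith) (by linarith) (by rw [hβ, ← heq]; ring)
  rw [← hβ, ← heq] at hp
  have hmul := (div_lt_div_iff₀ hε0 hε0).1 hζlt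
  have hfin := (mul_lt_mul_iff_of_pos_right hε0).1 hmul
  linarith

end maxi

section struct
variable {r t : ℕ} {ρ : Fin r → ℝ}

lemma sum_skew (hr : 1 ≤ r) (ψ : ℝ → ℝ) {j : Fin r} {α β : ℝ} (hβ : ρ j = β)
    (hα : ∀ i, i ≠ j → ρ i = α) :
    ∑ k, ψ (ρ k) = ψ β + ((r:ℝ) - 1) * ψ α := by
  rw [← Finset.add_sum_erase _ _ (Finset.mem_univ j), hβ]
  congr 1
  have he : ∀ k ∈ Finset.univ.erase j, ψ (ρ k) = ψ α := by
    intro k hk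
    rw [hα k (Finset.mem_erase.1 hk).1]
  rw [Finset.sum_congr rfl he, Finset.sum_const, Finset.card_erase_of_mem (Finset.mem_univ j),
    Finset.card_univ, Fintype.card_fin, nsmul_eq_mul]
  congr 1
  push_cast [Nat.cast_sub hr]
  ring

lemma maximizer_structure (ht : 3 ≤ t) (hr : 2 ≤ r) (hfe : Feas r ρ)
    (hmax : ∀ σ : Fin r → ℝ, Feas r σ → Fobj t σ ≤ Fobj t ρ) :
    (∀ i, ρ i = 1 / (r:ℝ)) ∨
    ∃ (j : Fin r) (α β : ℝ), 0 < α ∧ α < 2/((t:ℝ)+1) ∧ 2/((t:ℝ)+1) < β ∧ β < 1 ∧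
      gfun t α = gfun t β ∧ ((r:ℝ)-1) * α + β = 1 ∧ ρ j = β ∧ ∀ i, i ≠ j → ρ i = α := by
  set c := 2/((t:ℝ)+1) with hcdef
  have hr1 : 1 ≤ r := by omega
  by_cases hall : ∀ i k : Fin r, ρ i = ρ k
  · left
    intro i
    have hsum := hfe.2
    have : ∑ k, ρ k = (r:ℝ) * ρ i := by
      rw [Finset.sum_congr rfl (fun k _ => hall k i), Finset.sum_const, Finset.card_univ,
        Fintype.card_fin, nsmul_eq_mul]
    rw [this] at hsum
    have hr0 : (r:ℝ) ≠ 0 := by positivity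
    field_simp at hsum ⊢
    linarith
  · right
    push_neg at hall
    obtain ⟨i0, k0, hik⟩ := hall
    obtain ⟨i, k, hlt⟩ : ∃ i k : Fin r, ρ i < ρ k := by
      rcases lt_or_gt_of_ne hik with h | h
      · exact ⟨i0, k0, h⟩
      · exact ⟨k0, i0, h⟩
    have hik' : i ≠ k := by rintro rfl; exact lt_irrefl _ hlt
    have hpos := all_pos ht hr1 hfe hmax
    have hlt1 := coord_lt_one ht hr hfe hmax
    have hgeq := g_all_eq ht hr1 hfe hmax
    -- ρ k > c
    have hkc : c < ρ k := by
      by_contra hkc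
      push_neg at hkc
      have := gfun_strictAntiOn ht ⟨le_of_lt (hpos i), le_trans (le_of_lt hlt) hkc⟩
        ⟨le_of_lt (hpos k), hkc⟩ hlt
      rw [hgeq i k] at this
      exact lt_irrefl _ this
    have hic : ρ i < c := by
      by_contra hic
      push_neg at hic
      have := gfun_strictMonoOn ht ⟨hic, le_of_lt (hlt1 i)⟩
        ⟨le_trans hic (le_of_lt hlt), le_of_lt (hlt1 k)⟩ hlt
      rw [hgeq i k] at this
      exact lt_irrefl _ this
    refine ⟨k, ρ i, ρ k, hpos i, hic, hkc, hlt1 k, hgeq i k, ?_, rfl, ?_⟩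
    · have := sum_skew hr1 id (j := k) (α := ρ i) (β := ρ k) rfl ?_
      · simp only [id] at this
        rw [hfe.2] at this
        linarith
      · intro m hm
        by_cases hmc : c < ρ m
        · exact absurd (at_most_one_big ht hfe hmax hm hmc (hlt1 m) hkc (hlt1 k)) not_false
        · push_neg at hmc
          exact (gfun_strictAntiOn ht).injOn ⟨le_of_lt (hpos m), hmc⟩
            ⟨le_of_lt (hpos i), le_of_lt hic⟩ (hgeq m i)
    · intro m hm
      by_cases hmc : c < ρ m
      · exact absurd (at_most_one_big ht hfe hmax hm hmc (hlt1 m) hkc (hlt1 k)) not_false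
      · push_neg at hmc
        exact (gfun_strictAntiOn ht).injOn ⟨le_of_lt (hpos m), hmc⟩
          ⟨le_of_lt (hpos i), le_of_lt hic⟩ (hgeq m i)

lemma phi_le_max (hr : 2 ≤ r) (hfe : Feas r ρ)
    (hmax : ∀ σ : Fin r → ℝ, Feas r σ → Fobj t σ ≤ Fobj t ρ)
    {j : Fin r} {α β : ℝ} (hβ : ρ j = β) (hα : ∀ i, i ≠ j → ρ i = α)
    (hsum : ((r:ℝ)-1) * α + β = 1)
    {x : ℝ} (hx0 : 0 ≤ x) (hx1 : x ≤ 1 / ((r:ℝ) - 1)) :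
    phi r t x ≤ phi r t α := by
  have hr1 : 1 ≤ r := by omega
  have hm : (0:ℝ) < (r:ℝ) - 1 := by
    have : (2:ℝ) ≤ (r:ℝ) := by exact_mod_cast hr
    linarith
  set σ : Fin r → ℝ := fun m => if m = j then 1 - ((r:ℝ) - 1) * x else x with hσ
  have hσj : σ j = 1 - ((r:ℝ) - 1) * x := by rw [hσ]; simp
  have hσm : ∀ m, m ≠ j → σ m = x := by intro m hm'; rw [hσ]; simp [hm']
  have hfeσ : Feas r σ := by
    constructor
    · intro m
      by_cases hmj : m = j
      · rw [hmj, hσj]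
        have := (le_div_iff₀ hm).1 hx1
        linarith
      · rw [hσm m hmj]; exact hx0
    · have := sum_skew hr1 id (j := j) hσj hσm
      simp only [id] at this
      rw [show (∑ i, σ i) = ∑ k, σ k from rfl, this]
      ring
  have hFσ : Fobj t σ = phi r t x := by
    unfold Fobj phi
    rw [sum_skew hr1 (ffun t) (j := j) hσj hσm]
    ring
  have hFρ : Fobj t ρ = phi r t α := by
    unfold Fobj phi
    rw [sum_skew hr1 (ffun t) (j := j) hβ hα]
    have : 1 - ((r:ℝ) - 1) * α = β := by linarith
    rw [this]
    ring
  have := hmax σ hfeσ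
  rwa [hFσ, hFρ] at this

end struct

noncomputable def A1 (t : ℕ) (x : ℝ) : ℝ := (1-x)^(t-2) * (2 - ((t:ℝ)+1)*x)
noncomputable def B1 (r t : ℕ) (x : ℝ) : ℝ :=
  ((r:ℝ)-1) * (((r:ℝ)-1)*x)^(t-2) * (((t:ℝ)-1) - ((t:ℝ)+1)*(((r:ℝ)-1)*x))

section case1
variable {r t : ℕ}

lemma h1f_eq (x : ℝ) : h1f r t x = (t:ℝ) * (B1 r t x - A1 t x) := by
  unfold h1f g1 B1 A1
  rw [show (1 - (1 - ((r:ℝ) - 1) * x)) = ((r:ℝ)-1)*x by ring]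
  ring

variable (ht : 3 ≤ t) (hr : 6 ≤ r) (hc1 : 2*r ≤ t + 1)
include ht hr hc1

lemma cast_facts : (3:ℝ) ≤ (t:ℝ) ∧ (5:ℝ) ≤ (r:ℝ) - 1 ∧ 2*((r:ℝ)-1) ≤ (t:ℝ) - 1 := by
  have h1 : (3:ℝ) ≤ (t:ℝ) := by exact_mod_cast ht
  have h2 : (6:ℝ) ≤ (r:ℝ) := by exact_mod_cast hr
  have h3 : 2*(r:ℝ) ≤ (t:ℝ) + 1 := by exact_mod_cast hc1
  exact ⟨h1, by linarith, by linarith⟩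

lemma c1_N_pos {x : ℝ} (hx : x < 2/((t:ℝ)+1)) :
    0 < ((t:ℝ)-1) - ((t:ℝ)+1)*(((r:ℝ)-1)*x) := by
  obtain ⟨h1, h2, h3⟩ := cast_facts ht hr hc1
  have hu : ((t:ℝ)+1)*x < 2 := by
    have := (lt_div_iff₀ (show (0:ℝ) < (t:ℝ)+1 by linarith)).1 hx
    linarith
  nlinarith

omit hc1 in
lemma c1_A1_pos {x : ℝ} (hx0 : 0 ≤ x) (hx : x < 2/((t:ℝ)+1)) : 0 < A1 t x := by
  have h1 : (3:ℝ) ≤ (t:ℝ) := by exact_mod_cast ht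
  have hu : ((t:ℝ)+1)*x < 2 := by
    have := (lt_div_iff₀ (show (0:ℝ) < (t:ℝ)+1 by linarith)).1 hx
    linarith
  have hx1 : x < 1 := by nlinarith
  unfold A1
  have : (0:ℝ) < 1 - x := by linarith
  have h2 : (0:ℝ) < (1-x)^(t-2) := by positivity
  nlinarith

lemma c1_B1_pos {x : ℝ} (hx0 : 0 < x) (hx : x < 2/((t:ℝ)+1)) : 0 < B1 r t x := by
  obtain ⟨h1, h2, h3⟩ := cast_facts ht hr hc1
  have hN := c1_N_pos ht hr hc1 hx
  have hmx : (0:ℝ) < ((r:ℝ)-1)*x := by nlinarith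
  have hp : (0:ℝ) < (((r:ℝ)-1)*x)^(t-2) := by positivity
  unfold B1
  exact mul_pos (mul_pos (by linarith) hp) hN

lemma c1_cross {x y : ℝ} (hx0 : 0 < x) (hxy : x < y) (hy : y < 2/((t:ℝ)+1)) :
    B1 r t x * A1 t y < B1 r t y * A1 t x := by
  obtain ⟨h1, h2, h3⟩ := cast_facts ht hr hc1
  have hm0 : (0:ℝ) < (r:ℝ) - 1 := by linarith
  have hx : x < 2/((t:ℝ)+1) := lt_trans hxy hy
  have hux : ((t:ℝ)+1)*x < 2 := by
    have := (lt_div_iff₀ (show (0:ℝ) < (t:ℝ)+1 by linarith)).1 hx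
    linarith
  have huy : ((t:ℝ)+1)*y < 2 := by
    have := (lt_div_iff₀ (show (0:ℝ) < (t:ℝ)+1 by linarith)).1 hy
    linarith
  have hy1 : y < 1 := by nlinarith
  have hn0 : t - 2 ≠ 0 := by omega
  have key1 : (((t:ℝ)-1) - ((t:ℝ)+1)*(((r:ℝ)-1)*x)) * (2 - ((t:ℝ)+1)*y)
      ≤ (((t:ℝ)-1) - ((t:ℝ)+1)*(((r:ℝ)-1)*y)) * (2 - ((t:ℝ)+1)*x) := by
    nlinarith [mul_nonneg (mul_nonneg (show (0:ℝ) ≤ (t:ℝ)+1 by linarith)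
      (show (0:ℝ) ≤ y - x by linarith)) (show (0:ℝ) ≤ ((t:ℝ)-1) - 2*((r:ℝ)-1) by linarith)]
  have hbase : ((r:ℝ)-1)*x*(1-y) < ((r:ℝ)-1)*y*(1-x) := by nlinarith
  have hbase0 : (0:ℝ) ≤ ((r:ℝ)-1)*x*(1-y) :=
    mul_nonneg (mul_nonneg hm0.le hx0.le) (by linarith)
  have key2 : (((r:ℝ)-1)*x)^(t-2) * (1-y)^(t-2) < (((r:ℝ)-1)*y)^(t-2) * (1-x)^(t-2) := by
    rw [← mul_pow, ← mul_pow]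
    exact pow_lt_pow_left₀ hbase hbase0 hn0
  have hNy : 0 < ((t:ℝ)-1) - ((t:ℝ)+1)*(((r:ℝ)-1)*y) := c1_N_pos ht hr hc1 hy
  have hDx : (0:ℝ) < 2 - ((t:ℝ)+1)*x := by linarith
  have hNyDx : 0 < (((t:ℝ)-1) - ((t:ℝ)+1)*(((r:ℝ)-1)*y)) * (2 - ((t:ℝ)+1)*x) :=
    mul_pos hNy hDx
  have e1 : B1 r t x * A1 t y = ((r:ℝ)-1) * ((((r:ℝ)-1)*x)^(t-2) * (1-y)^(t-2) *
      ((((t:ℝ)-1) - ((t:ℝ)+1)*(((r:ℝ)-1)*x)) * (2 - ((t:ℝ)+1)*y))) := by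
    unfold B1 A1; ring
  have e2 : B1 r t y * A1 t x = ((r:ℝ)-1) * ((((r:ℝ)-1)*y)^(t-2) * (1-x)^(t-2) *
      ((((t:ℝ)-1) - ((t:ℝ)+1)*(((r:ℝ)-1)*y)) * (2 - ((t:ℝ)+1)*x))) := by
    unfold B1 A1; ring
  rw [e1, e2]
  apply mul_lt_mul_of_pos_left _ hm0
  calc (((r:ℝ)-1)*x)^(t-2) * (1-y)^(t-2) *
        ((((t:ℝ)-1) - ((t:ℝ)+1)*(((r:ℝ)-1)*x)) * (2 - ((t:ℝ)+1)*y))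
      ≤ (((r:ℝ)-1)*x)^(t-2) * (1-y)^(t-2) *
        ((((t:ℝ)-1) - ((t:ℝ)+1)*(((r:ℝ)-1)*y)) * (2 - ((t:ℝ)+1)*x)) := by
        apply mul_le_mul_of_nonneg_left key1
          (mul_nonneg (pow_nonneg (by nlinarith) _) (pow_nonneg (by linarith) _))
    _ < (((r:ℝ)-1)*y)^(t-2) * (1-x)^(t-2) *
        ((((t:ℝ)-1) - ((t:ℝ)+1)*(((r:ℝ)-1)*y)) * (2 - ((t:ℝ)+1)*x)) :=
        mul_lt_mul_of_pos_right key2 hNyDx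

lemma c1_crossing {x y : ℝ} (hx0 : 0 < x) (hxy : x < y) (hy : y < 2/((t:ℝ)+1))
    (hx1 : 0 ≤ h1f r t x) : 0 < h1f r t y := by
  obtain ⟨h1, h2, h3⟩ := cast_facts ht hr hc1
  rw [h1f_eq] at hx1 ⊢
  have hBA : A1 t x ≤ B1 r t x := by nlinarith
  have hA1x : 0 < A1 t x := c1_A1_pos ht hr hx0.le (lt_trans hxy hy)
  have hA1y : 0 < A1 t y := c1_A1_pos ht hr (by linarith) hy
  have hcross := c1_cross ht hr hc1 hx0 hxy hy
  have hBy : A1 t y < B1 r t y := by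
    have step : A1 t x * A1 t y ≤ B1 r t x * A1 t y :=
      mul_le_mul_of_nonneg_right hBA hA1y.le
    have : A1 t x * A1 t y < B1 r t y * A1 t x := lt_of_le_of_lt step hcross
    nlinarith
  nlinarith

lemma hfun_c_nonpos : hfun r t (2/((t:ℝ)+1)) ≤ 0 := by
  obtain ⟨h1, h2, h3⟩ := cast_facts ht hr hc1
  unfold hfun
  have hmem : 1 - ((r:ℝ)-1) * (2/((t:ℝ)+1)) ∈ Set.Icc (0:ℝ) 1 := by
    constructor
    · have : ((r:ℝ)-1) * (2/((t:ℝ)+1)) ≤ 1 := by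
        rw [mul_comm, div_mul_eq_mul_div]
        rw [div_le_one (show (0:ℝ) < (t:ℝ)+1 by linarith)]
        linarith
      linarith
    · have : 0 ≤ ((r:ℝ)-1) * (2/((t:ℝ)+1)) := by positivity
      linarith
  linarith [gfun_c_min ht hmem]

lemma c1_unique {x1 x2 : ℝ} (h10 : 0 < x1) (h1c : x1 < 2/((t:ℝ)+1))
    (h20 : 0 < x2) (h2c : x2 < 2/((t:ℝ)+1))
    (hz1 : hfun r t x1 = 0) (hz2 : hfun r t x2 = 0) : x1 = x2 := by
  obtain ⟨h1, h2, h3⟩ := cast_facts ht hr hc1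
  set c := 2/((t:ℝ)+1) with hcdef
  have aux : ∀ a b : ℝ, 0 < a → a < b → b < c → hfun r t a = 0 → hfun r t b = 0 → False := by
    intro a b ha0 hab hbc hza hzb
    obtain ⟨ξ, hξ, hslope⟩ := exists_hasDerivAt_eq_slope (hfun r t) (h1f r t) hab
      (continuous_hfun r t).continuousOn (fun x _ => hasDerivAt_hfun ht x)
    rw [hza, hzb] at hslope
    simp only [sub_zero, zero_div] at hslope
    have hξ0 : 0 ≤ h1f r t ξ := le_of_eq hslope.symm
    have hmono : StrictMonoOn (hfun r t) (Set.Icc ξ c) := by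
      apply strictMonoOn_of_deriv_pos (convex_Icc _ _) (continuous_hfun r t).continuousOn
      intro y hy
      rw [interior_Icc, Set.mem_Ioo] at hy
      rw [(hasDerivAt_hfun ht y).deriv]
      exact c1_crossing ht hr hc1 (lt_trans ha0 hξ.1) hy.1 hy.2 hξ0
    have hbc' : hfun r t b < hfun r t c :=
      hmono ⟨hξ.2.le, hbc.le⟩ ⟨le_trans hξ.2.le hbc.le, le_refl _⟩ hbc
    rw [hzb] at hbc'
    linarith [hfun_c_nonpos ht hr hc1]
  rcases lt_trichotomy x1 x2 with h | h | h
  · exact absurd (aux x1 x2 h10 h h2c hz1 hz2) not_false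
  · exact h
  · exact absurd (aux x2 x1 h20 h h1c hz2 hz1) not_false

end case1

noncomputable def A2 (t : ℕ) (x : ℝ) : ℝ := (1-x)^(t-3) * (3 - ((t:ℝ)+1)*x)
noncomputable def B2 (r t : ℕ) (x : ℝ) : ℝ :=
  ((r:ℝ)-1)^2 * (((r:ℝ)-1)*x)^(t-3) * (((t:ℝ)+1)*(((r:ℝ)-1)*x) - ((t:ℝ)-2))

lemma continuous_phi (r t : ℕ) : Continuous (phi r t) := by
  unfold phi ffun; fun_prop

section case2
variable {r t : ℕ}

lemma h2f_eq (x : ℝ) : h2f r t x = (t:ℝ) * ((t:ℝ)-1) * (A2 t x - B2 r t x) := by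
  unfold h2f g2 B2 A2
  rw [show (1 - (1 - ((r:ℝ) - 1) * x)) = ((r:ℝ)-1)*x by ring]
  ring

variable (ht : 3 ≤ t) (hr : 6 ≤ r) (hc2 : t + 1 < 2*r)
include ht hr hc2

lemma c2_facts : (3:ℝ) ≤ (t:ℝ) ∧ (5:ℝ) ≤ (r:ℝ) - 1 ∧ (t:ℝ) + 1 < 2*(r:ℝ) := by
  have h1 : (3:ℝ) ≤ (t:ℝ) := by exact_mod_cast ht
  have h2 : (6:ℝ) ≤ (r:ℝ) := by exact_mod_cast hr
  have h3 : (t:ℝ) + 1 < 2*(r:ℝ) := by exact_mod_cast hc2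
  exact ⟨h1, by linarith, h3⟩

lemma c2_A2_pos {x : ℝ} (hx0 : 0 ≤ x) (hx : x ≤ 1/(r:ℝ)) : 0 < A2 t x := by
  obtain ⟨h1, h2, h3⟩ := c2_facts ht hr hc2
  have hr0 : (0:ℝ) < (r:ℝ) := by linarith
  have hu : ((t:ℝ)+1)*x < 2 := by
    have hxr : x * (r:ℝ) ≤ 1 := (le_div_iff₀ hr0).1 hx
    nlinarith
  have hx1 : x < 1 := by nlinarith
  have hp : (0:ℝ) < (1-x)^(t-3) := by
    have : (0:ℝ) < 1 - x := by linarith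
    positivity
  unfold A2
  nlinarith

lemma c2_shape {p q : ℝ} (hp0 : 0 < p) (hpq : p < q) (hq : q ≤ 1/(r:ℝ))
    (hp2 : h2f r t p ≤ 0) : h2f r t q < 0 := by
  obtain ⟨h1, h2, h3⟩ := c2_facts ht hr hc2
  have hr0 : (0:ℝ) < (r:ℝ) := by linarith
  have hm0 : (0:ℝ) < (r:ℝ) - 1 := by linarith
  have hq1 : q < 1 := by
    have : q ≤ 1/(r:ℝ) := hq
    have : 1/(r:ℝ) ≤ 1/6 := by
      apply one_div_le_one_div_of_le (by norm_num) (by linarith)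
    linarith
  have hp1 : p < 1 := lt_trans hpq hq1
  rw [h2f_eq] at hp2 ⊢
  have htt : (0:ℝ) < (t:ℝ) * ((t:ℝ)-1) := by nlinarith
  have hABp : A2 t p - B2 r t p ≤ 0 := by nlinarith
  have hA2p : 0 < A2 t p := c2_A2_pos ht hr hc2 hp0.le (by linarith)
  have hvp : 0 < ((t:ℝ)+1)*(((r:ℝ)-1)*p) - ((t:ℝ)-2) := by
    by_contra hv
    push_neg at hv
    have hB2p : B2 r t p ≤ 0 := by
      unfold B2
      apply mul_nonpos_of_nonneg_of_nonpos _ hv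
      have : (0:ℝ) ≤ ((r:ℝ)-1)*p := by positivity
      positivity
    linarith
  have hvq : ((t:ℝ)+1)*(((r:ℝ)-1)*p) - ((t:ℝ)-2) < ((t:ℝ)+1)*(((r:ℝ)-1)*q) - ((t:ℝ)-2) := by
    nlinarith
  -- A2 decreases
  have hpowA : (1-q)^(t-3) ≤ (1-p)^(t-3) :=
    pow_le_pow_left₀ (by linarith) (by linarith) _
  have h3q : (0:ℝ) < 3 - ((t:ℝ)+1)*q := by
    have hxr : q * (r:ℝ) ≤ 1 := (le_div_iff₀ hr0).1 hq
    nlinarith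
  have hp1p : (0:ℝ) < (1-p)^(t-3) := by
    have : (0:ℝ) < 1-p := by linarith
    positivity
  have hA2 : A2 t q < A2 t p := by
    unfold A2
    calc (1-q)^(t-3) * (3 - ((t:ℝ)+1)*q) ≤ (1-p)^(t-3) * (3 - ((t:ℝ)+1)*q) :=
          mul_le_mul_of_nonneg_right hpowA h3q.le
      _ < (1-p)^(t-3) * (3 - ((t:ℝ)+1)*p) := by
          apply mul_lt_mul_of_pos_left (by nlinarith) hp1p
  -- B2 increases
  have hpowB : (((r:ℝ)-1)*p)^(t-3) ≤ (((r:ℝ)-1)*q)^(t-3) :=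
    pow_le_pow_left₀ (mul_nonneg hm0.le hp0.le) (by nlinarith) _
  have hB2 : B2 r t p < B2 r t q := by
    unfold B2
    have huq : (0:ℝ) < ((r:ℝ)-1)^2 * (((r:ℝ)-1)*q)^(t-3) := by
      have : (0:ℝ) < ((r:ℝ)-1)*q := mul_pos hm0 (lt_trans hp0 hpq)
      positivity
    calc ((r:ℝ)-1)^2 * (((r:ℝ)-1)*p)^(t-3) * (((t:ℝ)+1)*(((r:ℝ)-1)*p) - ((t:ℝ)-2))
        ≤ ((r:ℝ)-1)^2 * (((r:ℝ)-1)*q)^(t-3) * (((t:ℝ)+1)*(((r:ℝ)-1)*p) - ((t:ℝ)-2)) := by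
          apply mul_le_mul_of_nonneg_right _ hvp.le
          apply mul_le_mul_of_nonneg_left hpowB (by positivity)
      _ < ((r:ℝ)-1)^2 * (((r:ℝ)-1)*q)^(t-3) * (((t:ℝ)+1)*(((r:ℝ)-1)*q) - ((t:ℝ)-2)) :=
          mul_lt_mul_of_pos_left hvq huq
  have : A2 t q - B2 r t q < 0 := by linarith
  exact mul_neg_of_pos_of_neg htt this

lemma c2_qc {ξ2 ξ3 ξ4 : ℝ} (h2 : 0 < ξ2) (h23 : ξ2 < ξ3) (h34 : ξ3 < ξ4)
    (h4 : ξ4 ≤ 1/(r:ℝ)) (hs2 : 0 < h1f r t ξ2) (hs3 : h1f r t ξ3 < 0)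
    (hs4 : 0 < h1f r t ξ4) : False := by
  obtain ⟨η1, hη1, he1⟩ := exists_hasDerivAt_eq_slope (h1f r t) (h2f r t) h23
    (continuous_h1f r t).continuousOn (fun x _ => hasDerivAt_h1f ht x)
  obtain ⟨η2, hη2, he2⟩ := exists_hasDerivAt_eq_slope (h1f r t) (h2f r t) h34
    (continuous_h1f r t).continuousOn (fun x _ => hasDerivAt_h1f ht x)
  have hn1 : h2f r t η1 < 0 := by
    rw [he1]
    apply div_neg_of_neg_of_pos (by linarith) (by linarith)
  have hn2 : 0 < h2f r t η2 := by
    rw [he2]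
    apply div_pos (by linarith) (by linarith)
  have := c2_shape ht hr hc2 (lt_trans h2 hη1.1) (lt_trans hη1.2 hη2.1)
    (le_trans hη2.2.le h4) hn1.le
  linarith

lemma c2_no_flat {a b : ℝ} (ha0 : 0 < a) (hab : a < b) (hb : b ≤ 1/(r:ℝ))
    (hz : ∀ y, a < y → y < b → hfun r t y = 0) : False := by
  have hd : 0 < b - a := by linarith
  set p1 := a + (b-a)/5 with hp1
  set p2 := a + 2*(b-a)/5 with hp2
  set p3 := a + 3*(b-a)/5 with hp3
  set p4 := a + 4*(b-a)/5 with hp4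
  have hz1 : hfun r t p1 = 0 := hz p1 (by rw [hp1]; linarith) (by rw [hp1]; linarith)
  have hz2 : hfun r t p2 = 0 := hz p2 (by rw [hp2]; linarith) (by rw [hp2]; linarith)
  have hz3 : hfun r t p3 = 0 := hz p3 (by rw [hp3]; linarith) (by rw [hp3]; linarith)
  have hz4 : hfun r t p4 = 0 := hz p4 (by rw [hp4]; linarith) (by rw [hp4]; linarith)
  have h12 : p1 < p2 := by rw [hp1, hp2]; linarith
  have h23 : p2 < p3 := by rw [hp2, hp3]; linarith
  have h34 : p3 < p4 := by rw [hp3, hp4]; linarith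
  obtain ⟨η1, hη1, he1⟩ := exists_hasDerivAt_eq_slope (hfun r t) (h1f r t) h12
    (continuous_hfun r t).continuousOn (fun x _ => hasDerivAt_hfun ht x)
  obtain ⟨η2, hη2, he2⟩ := exists_hasDerivAt_eq_slope (hfun r t) (h1f r t) h23
    (continuous_hfun r t).continuousOn (fun x _ => hasDerivAt_hfun ht x)
  obtain ⟨η3, hη3, he3⟩ := exists_hasDerivAt_eq_slope (hfun r t) (h1f r t) h34
    (continuous_hfun r t).continuousOn (fun x _ => hasDerivAt_hfun ht x)
  rw [hz1, hz2] at he1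
  rw [hz2, hz3] at he2
  rw [hz3, hz4] at he3
  simp only [sub_zero, zero_div, sub_self] at he1 he2 he3
  have hη12 : η1 < η2 := lt_trans hη1.2 hη2.1
  have hη23 : η2 < η3 := lt_trans hη2.2 hη3.1
  obtain ⟨ζ1, hζ1, hze1⟩ := exists_hasDerivAt_eq_slope (h1f r t) (h2f r t) hη12
    (continuous_h1f r t).continuousOn (fun x _ => hasDerivAt_h1f ht x)
  obtain ⟨ζ2, hζ2, hze2⟩ := exists_hasDerivAt_eq_slope (h1f r t) (h2f r t) hη23
    (continuous_h1f r t).continuousOn (fun x _ => hasDerivAt_h1f ht x)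
  rw [he1, he2] at hze1
  rw [he2, he3] at hze2
  simp only [sub_self, zero_div] at hze1 hze2
  have hζ10 : 0 < ζ1 := by
    have : a < p1 := by rw [hp1]; linarith
    linarith [hζ1.1, hη1.1]
  have hζ12 : ζ1 < ζ2 := lt_trans hζ1.2 hζ2.1
  have hζ2b : ζ2 ≤ 1/(r:ℝ) := by
    have : p4 < b := by rw [hp4]; linarith
    linarith [hζ2.2, hη3.2]
  have := c2_shape ht hr hc2 hζ10 hζ12 hζ2b (le_of_eq hze1)
  rw [hze2] at this
  exact lt_irrefl _ this

lemma c2_main {x1 x2 : ℝ} (h10 : 0 < x1) (hz1 : hfun r t x1 = 0)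
    (h20 : 0 < x2) (h2c : x2 < 2/((t:ℝ)+1)) (hz2 : hfun r t x2 = 0)
    (hβ : 2/((t:ℝ)+1) < 1 - ((r:ℝ)-1)*x2)
    (hphimax : ∀ x, 0 ≤ x → x ≤ 1/((r:ℝ)-1) → phi r t x ≤ phi r t x2) :
    x2 ≤ x1 := by
  obtain ⟨h1, h2, h3⟩ := c2_facts ht hr hc2
  have hr0 : (0:ℝ) < (r:ℝ) := by linarith
  have hm0 : (0:ℝ) < (r:ℝ) - 1 := by linarith
  by_contra hlt
  push_neg at hlt
  -- x2 < 1/r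
  have hc0 : (0:ℝ) < 2/((t:ℝ)+1) := by positivity
  have hx2r : x2 < 1/(r:ℝ) := by
    rw [lt_div_iff₀ hr0]
    nlinarith
  have hmr : 1/(r:ℝ) ≤ 1/((r:ℝ)-1) :=
    one_div_le_one_div_of_le hm0 (by linarith)
  have hfr : hfun r t (1/(r:ℝ)) = 0 := by
    unfold hfun
    rw [show 1 - ((r:ℝ)-1)*(1/(r:ℝ)) = 1/(r:ℝ) by field_simp; ring]
    ring
  -- step 1 : ∃ y ∈ (x1, x2), hfun y > 0
  have hy : ∃ y, x1 < y ∧ y < x2 ∧ 0 < hfun r t y := by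
    by_contra hno
    push_neg at hno
    by_cases hall0 : ∀ y, x1 < y → y < x2 → hfun r t y = 0
    · exact c2_no_flat ht hr hc2 h10 hlt (le_of_lt hx2r) hall0
    · push_neg at hall0
      obtain ⟨y0, hy01, hy02, hy0ne⟩ := hall0
      have hy0neg : hfun r t y0 < 0 := lt_of_le_of_ne (hno y0 hy01 hy02) hy0ne
      have hanti : AntitoneOn (phi r t) (Set.Icc x1 x2) := by
        apply antitoneOn_of_deriv_nonpos (convex_Icc _ _) (continuous_phi r t).continuousOn
        · intro z hz
          exact (hasDerivAt_phi ht z).differentiableAt.differentiableWithinAt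
        · intro z hz
          rw [interior_Icc, Set.mem_Ioo] at hz
          rw [(hasDerivAt_phi ht z).deriv]
          exact mul_nonpos_of_nonneg_of_nonpos hm0.le (hno z hz.1 hz.2)
      have h12 : phi r t x1 ≤ phi r t x2 :=
        hphimax x1 h10.le (by linarith)
      have hconst : ∀ z, z ∈ Set.Icc x1 x2 → phi r t z = phi r t x2 := by
        intro z hz
        have ha := hanti (Set.mem_Icc.2 ⟨le_refl _, hlt.le⟩) hz hz.1
        have hb := hanti hz (Set.mem_Icc.2 ⟨hlt.le, le_refl _⟩) hz.2
        linarith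
      obtain ⟨δ, hδ0, hδ⟩ := Metric.eventually_nhds_iff.1
        ((continuous_hfun r t).continuousAt.eventually_lt_const hy0neg)
      set z1 := max (y0 - δ/2) ((x1+y0)/2) with hz1def
      have hz1y : z1 < y0 := max_lt (by linarith) (by linarith)
      have hz1x : x1 < z1 := lt_of_lt_of_le (by linarith) (le_max_right _ _)
      have hstrict : StrictAntiOn (phi r t) (Set.Icc z1 y0) := by
        apply strictAntiOn_of_deriv_neg (convex_Icc _ _) (continuous_phi r t).continuousOn
        intro z hz
        rw [interior_Icc, Set.mem_Ioo] at hz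
        rw [(hasDerivAt_phi ht z).deriv]
        apply mul_neg_of_pos_of_neg hm0
        apply hδ
        rw [Real.dist_eq, abs_lt]
        have hle : y0 - δ/2 ≤ z1 := le_max_left _ _
        constructor <;> linarith [hz.1, hz.2]
      have hlt2 : phi r t y0 < phi r t z1 :=
        hstrict (Set.mem_Icc.2 ⟨le_refl _, hz1y.le⟩) (Set.mem_Icc.2 ⟨hz1y.le, le_refl _⟩) hz1y
      rw [hconst y0 (Set.mem_Icc.2 ⟨hy01.le, hy02.le⟩),
        hconst z1 (Set.mem_Icc.2 ⟨hz1x.le, by linarith⟩)] at hlt2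
      exact lt_irrefl _ hlt2
  -- step 2 : ∃ w ∈ (x2, 1/r), hfun w < 0
  have hw : ∃ w, x2 < w ∧ w < 1/(r:ℝ) ∧ hfun r t w < 0 := by
    by_contra hno
    push_neg at hno
    by_cases hall0 : ∀ w, x2 < w → w < 1/(r:ℝ) → hfun r t w = 0
    · exact c2_no_flat ht hr hc2 h20 hx2r (le_refl _) hall0
    · push_neg at hall0
      obtain ⟨w0, hw01, hw02, hw0ne⟩ := hall0
      have hw0pos : 0 < hfun r t w0 :=
        lt_of_le_of_ne (hno w0 hw01 hw02) (Ne.symm hw0ne)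
      have hmono : MonotoneOn (phi r t) (Set.Icc x2 (1/(r:ℝ))) := by
        apply monotoneOn_of_deriv_nonneg (convex_Icc _ _) (continuous_phi r t).continuousOn
        · intro z hz
          exact (hasDerivAt_phi ht z).differentiableAt.differentiableWithinAt
        · intro z hz
          rw [interior_Icc, Set.mem_Ioo] at hz
          rw [(hasDerivAt_phi ht z).deriv]
          exact mul_nonneg hm0.le (hno z hz.1 hz.2)
      have h21 : phi r t (1/(r:ℝ)) ≤ phi r t x2 :=
        hphimax (1/(r:ℝ)) (by positivity) hmr
      have hconst : ∀ z, z ∈ Set.Icc x2 (1/(r:ℝ)) → phi r t z = phi r t x2 := by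
        intro z hz
        have ha := hmono (Set.mem_Icc.2 ⟨le_refl _, hx2r.le⟩) hz hz.1
        have hb := hmono hz (Set.mem_Icc.2 ⟨hx2r.le, le_refl _⟩) hz.2
        linarith
      obtain ⟨δ, hδ0, hδ⟩ := Metric.eventually_nhds_iff.1
        ((continuous_hfun r t).continuousAt.eventually_const_lt hw0pos)
      set z2 := min (w0 + δ/2) ((w0 + 1/(r:ℝ))/2) with hz2def
      have hz2w : w0 < z2 := lt_min (by linarith) (by linarith)
      have hz2r : z2 < 1/(r:ℝ) := lt_of_le_of_lt (min_le_right _ _) (by linarith)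
      have hstrict : StrictMonoOn (phi r t) (Set.Icc w0 z2) := by
        apply strictMonoOn_of_deriv_pos (convex_Icc _ _) (continuous_phi r t).continuousOn
        intro z hz
        rw [interior_Icc, Set.mem_Ioo] at hz
        rw [(hasDerivAt_phi ht z).deriv]
        apply mul_pos hm0
        apply hδ
        rw [Real.dist_eq, abs_lt]
        have hle : z2 ≤ w0 + δ/2 := min_le_left _ _
        constructor <;> linarith [hz.1, hz.2]
      have hlt2 : phi r t w0 < phi r t z2 :=
        hstrict (Set.mem_Icc.2 ⟨le_refl _, hz2w.le⟩) (Set.mem_Icc.2 ⟨hz2w.le, le_refl _⟩) hz2w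
      rw [hconst w0 (Set.mem_Icc.2 ⟨hw01.le, hw02.le⟩),
        hconst z2 (Set.mem_Icc.2 ⟨by linarith, hz2r.le⟩)] at hlt2
      exact lt_irrefl _ hlt2
  obtain ⟨y, hy1, hy2, hy3⟩ := hy
  obtain ⟨w, hw1, hw2, hw3⟩ := hw
  obtain ⟨ξ2, hξ2, hsξ2⟩ := exists_hasDerivAt_eq_slope (hfun r t) (h1f r t)
    (show x1 < y by linarith) (continuous_hfun r t).continuousOn
    (fun x _ => hasDerivAt_hfun ht x)
  obtain ⟨ξ3, hξ3, hsξ3⟩ := exists_hasDerivAt_eq_slope (hfun r t) (h1f r t)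
    (show x2 < w by linarith) (continuous_hfun r t).continuousOn
    (fun x _ => hasDerivAt_hfun ht x)
  obtain ⟨ξ4, hξ4, hsξ4⟩ := exists_hasDerivAt_eq_slope (hfun r t) (h1f r t)
    (show w < 1/(r:ℝ) by linarith) (continuous_hfun r t).continuousOn
    (fun x _ => hasDerivAt_hfun ht x)
  rw [hz1] at hsξ2
  rw [hz2] at hsξ3
  rw [hfr] at hsξ4
  have hp2 : 0 < h1f r t ξ2 := by
    rw [hsξ2]
    apply div_pos (by linarith) (by linarith)
  have hp3 : h1f r t ξ3 < 0 := by
    rw [hsξ3]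
    apply div_neg_of_neg_of_pos (by linarith) (by linarith)
  have hp4 : 0 < h1f r t ξ4 := by
    rw [hsξ4]
    apply div_pos (by linarith) (by linarith)
  exact c2_qc ht hr hc2 (by linarith [hξ2.1]) (by linarith [hξ2.2, hξ3.1])
    (by linarith [hξ3.2, hξ4.1]) (by linarith [hξ4.2]) hp2 hp3 hp4

end case2


/-- Theorem 3.5: for legal pairs, the maximum of `F(ρ) = Σ ρᵢ(1-ρᵢ)^t` on the
simplex is attained, and every maximizer is the Turán solution or the skew
solution `(α,…,α,β)` with `g(α) = g(β)` largest. -/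
theorem optimal_solution (r t : ℕ) (hleg : Legal r t) :
    (∃ ρ : Fin r → ℝ, ((∀ i, 0 ≤ ρ i) ∧ ∑ i, ρ i = 1) ∧
      ∀ σ : Fin r → ℝ, ((∀ i, 0 ≤ σ i) ∧ ∑ i, σ i = 1) →
        ∑ i, σ i * (1 - σ i) ^ t ≤ ∑ i, ρ i * (1 - ρ i) ^ t) ∧
    ∀ ρ : Fin r → ℝ, ((∀ i, 0 ≤ ρ i) ∧ ∑ i, ρ i = 1) →
      (∀ σ : Fin r → ℝ, ((∀ i, 0 ≤ σ i) ∧ ∑ i, σ i = 1) →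
        ∑ i, σ i * (1 - σ i) ^ t ≤ ∑ i, ρ i * (1 - ρ i) ^ t) →
      ((∀ i, ρ i = 1 / (r : ℝ)) ∨
        ∃ α β : ℝ, 0 < α ∧ α < 2 / ((t : ℝ) + 1) ∧ 2 / ((t : ℝ) + 1) < β ∧ β < 1 ∧
          gfun t α = gfun t β ∧ ((r : ℝ) - 1) * α + β = 1 ∧
          (∃ j : Fin r, ρ j = β ∧ ∀ i : Fin r, i ≠ j → ρ i = α) ∧
          ∀ α' β' : ℝ, 0 < α' → α' < 2 / ((t : ℝ) + 1) → 2 / ((t : ℝ) + 1) < β' →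
            β' < 1 → gfun t α' = gfun t β' → ((r : ℝ) - 1) * α' + β' = 1 →
            gfun t α' ≤ gfun t α) := by
  have hr : 6 ≤ r := by
    rcases hleg with ⟨h,_⟩|⟨h,_⟩|⟨h,_⟩|⟨h,_⟩ <;> omega
  have ht : 3 ≤ t := by
    rcases hleg with ⟨_,h⟩|⟨_,h⟩|⟨_,h⟩|⟨_,h⟩ <;> omega
  constructor
  · obtain ⟨ρ, hfe, hmax⟩ := exists_max (t := t) (r := r) (by omega)
    exact ⟨ρ, hfe, fun σ hσ => hmax σ hσ⟩
  · intro ρ hfe hmax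
    have hfe' : Feas r ρ := hfe
    have hmax' : ∀ σ : Fin r → ℝ, Feas r σ → Fobj t σ ≤ Fobj t ρ := fun σ hσ => hmax σ hσ
    rcases maximizer_structure ht (by omega) hfe' hmax' with
      hL | ⟨j, α, β, hα0, hαc, hβc, hβ1, hgαβ, hsum, hρj, hρα⟩
    · left; exact hL
    · right
      refine ⟨α, β, hα0, hαc, hβc, hβ1, hgαβ, hsum, ⟨j, hρj, hρα⟩, ?_⟩
      intro α' β' h1 h2 h3 h4 h5 h6
      have hβeq : 1 - ((r:ℝ) - 1) * α = β := by linarith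
      have hβ'eq : 1 - ((r:ℝ) - 1) * α' = β' := by linarith
      have hzα : hfun r t α = 0 := by
        unfold hfun; rw [hβeq, hgαβ, sub_self]
      have hzα' : hfun r t α' = 0 := by
        unfold hfun; rw [hβ'eq, h5, sub_self]
      by_cases hcase : 2*r ≤ t + 1
      · have heq := c1_unique ht hr hcase h1 h2 hα0 hαc hzα' hzα
        rw [heq]
      · have hcase' : t + 1 < 2*r := by omega
        have hβexpr : 2/((t:ℝ)+1) < 1 - ((r:ℝ)-1)*α := by rw [hβeq]; exact hβc
        have hphimax : ∀ x, 0 ≤ x → x ≤ 1/((r:ℝ)-1) → phi r t x ≤ phi r t α :=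
          fun x hx0 hx1 => phi_le_max (by omega) hfe' hmax' hρj hρα hsum hx0 hx1
        have hle := c2_main ht hr hcase' h1 hzα' hα0 hαc hzα hβexpr hphimax
        rcases eq_or_lt_of_le hle with he | hlt
        · rw [he]
        · exact le_of_lt (gfun_strictAntiOn ht ⟨hα0.le, hαc.le⟩ ⟨h1.le, h2.le⟩ hlt)
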